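/- Let G = (V,E) be a k-uniform hypergraph, let r ≥ p ≥ 2 with k ≥ p, and let x be a positive integer. Define the dependency d(G) as the maximum, over hyperedges e ∈ E, of the number of other hyperedges e' ∈ E with e' ≠ e and e' ∩ e ≠ ∅. If d(G) ≤ (1/e)·( r^k / ((p−1)^k · C(r,p−1)) )^x − 1, where e is Euler's number and C(r,p−1) is the binomial coefficient, then G has a strong (r,p) cover of size x; in particular χ^c(G,k,r,p) ≤ x. -/

import Mathlib

open Finset

/-- `E` (the hyperedge set of a hypergraph on vertex set `V`) has a strong `(r,p)` cover of
size `t`: there are `t` `r`-colorings of `V` such that every hyperedge receives at least `p`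
distinct colors in at least one of them. -/
def HasStrongCover {V : Type*} [DecidableEq V] (E : Finset (Finset V)) (r p t : ℕ) : Prop :=
  ∃ χ : Fin t → V → Fin r, ∀ e ∈ E, ∃ i, p ≤ (e.image (χ i)).card

/-- The strong `(r,p)` cover number: minimum size of a strong `(r,p)` cover. -/
noncomputable def coverNumber {V : Type*} [DecidableEq V] (E : Finset (Finset V)) (r p : ℕ) : ℕ :=
  sInf {t | HasStrongCover E r p t}

/-- The dependency of a hypergraph: the maximum, over hyperedges `e`, of the number of other
hyperedges sharing at least one vertex with `e`. -/
def dependency {V : Type*} [DecidableEq V] (E : Finset (Finset V)) : ℕ :=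
  E.sup fun e => (E.filter fun e' => e' ≠ e ∧ ¬ Disjoint e' e).card


lemma indep_count {V : Type*} [Fintype V] [DecidableEq V] {x r : ℕ}
    (s : Finset V) (P Q : (Fin x → V → Fin r) → Prop) [DecidablePred P] [DecidablePred Q]
    (hP : ∀ ω ω' : Fin x → V → Fin r, (∀ i v, v ∈ s → ω i v = ω' i v) → P ω → P ω')
    (hQ : ∀ ω ω' : Fin x → V → Fin r, (∀ i v, v ∉ s → ω i v = ω' i v) → Q ω → Q ω') :
    (univ.filter fun ω => P ω ∧ Q ω).card * Fintype.card (Fin x → V → Fin r)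
      = (univ.filter P).card * (univ.filter Q).card := by
  let c : (Fin x → V → Fin r) → (Fin x → V → Fin r) → (Fin x → V → Fin r) :=
    fun ω ω' i v => if v ∈ s then ω i v else ω' i v
  have hcs : ∀ ω ω' : Fin x → V → Fin r, ∀ i v, v ∈ s → c ω ω' i v = ω i v := by
    intro ω ω' i v hv; simp [c, hv]
  have hcn : ∀ ω ω' : Fin x → V → Fin r, ∀ i v, v ∉ s → c ω ω' i v = ω' i v := by
    intro ω ω' i v hv; simp [c, hv]
  have hinv : ∀ ω ω' : Fin x → V → Fin r, c (c ω ω') (c ω' ω) = ω := by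
    intro ω ω'; funext i v
    by_cases hv : v ∈ s <;> simp [c, hv]
  have key : ((univ.filter fun ω => P ω ∧ Q ω) ×ˢ (univ : Finset (Fin x → V → Fin r))).card
      = ((univ.filter P) ×ˢ (univ.filter Q)).card := by
    refine Finset.card_bij' (fun z _ => (c z.1 z.2, c z.2 z.1))
      (fun z _ => (c z.1 z.2, c z.2 z.1)) ?_ ?_ ?_ ?_
    · rintro ⟨a, b⟩ hz
      simp only [mem_product, mem_filter, mem_univ, true_and] at hz ⊢
      exact ⟨hP a _ (fun i v hv => (hcs a b i v hv).symm) hz.1.1,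
             hQ a _ (fun i v hv => (hcn b a i v hv).symm) hz.1.2⟩
    · rintro ⟨a, b⟩ hz
      simp only [mem_product, mem_filter, mem_univ, true_and, and_true] at hz ⊢
      exact ⟨hP a _ (fun i v hv => (hcs a b i v hv).symm) hz.1,
             hQ b _ (fun i v hv => (hcn a b i v hv).symm) hz.2⟩
    · rintro ⟨a, b⟩ _; simp only [Prod.mk.injEq]; exact ⟨hinv a b, hinv b a⟩
    · rintro ⟨a, b⟩ _; simp only [Prod.mk.injEq]; exact ⟨hinv a b, hinv b a⟩
  simpa [Finset.card_product, Finset.card_univ] using key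


lemma card_filter_forall_fin {F : Type*} [Fintype F] [DecidableEq F] (x : ℕ)
    (Pr : F → Prop) [DecidablePred Pr] :
    (univ.filter fun ω : Fin x → F => ∀ i, Pr (ω i)).card = (univ.filter Pr).card ^ x := by
  rw [← Fintype.card_subtype, ← Fintype.card_subtype]
  rw [Fintype.card_congr (Equiv.subtypePiEquivPi (p := fun _ : Fin x => Pr))]
  simp [Fintype.card_fun]

lemma card_filter_mem_count {V : Type*} [Fintype V] [DecidableEq V] {r : ℕ}
    (e : Finset V) (T : Finset (Fin r)) :
    (univ.filter fun f : V → Fin r => ∀ v ∈ e, f v ∈ T).card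
      = T.card ^ e.card * r ^ (Fintype.card V - e.card) := by
  rw [← Fintype.card_subtype]
  rw [Fintype.card_congr (Equiv.subtypePiEquivPi (p := fun v (c : Fin r) => v ∈ e → c ∈ T))]
  rw [Fintype.card_pi]
  have h : ∀ v : V, Fintype.card {c : Fin r // v ∈ e → c ∈ T}
      = if v ∈ e then T.card else r := by
    intro v
    by_cases hv : v ∈ e
    · simp [hv, Fintype.card_subtype]
    · simp [hv, Fintype.card_subtype]
  simp_rw [h]
  rw [← Finset.prod_filter_mul_prod_filter_not univ (· ∈ e)]
  rw [Finset.prod_congr rfl (fun v hv => if_pos (mem_filter.mp hv).2),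
      Finset.prod_congr rfl (fun v hv => if_neg (mem_filter.mp hv).2)]
  rw [Finset.prod_const, Finset.prod_const]
  congr 1
  · congr 1; simp [Finset.filter_mem_eq_inter]
  · congr 1
    have : univ.filter (fun v => ¬ v ∈ e) = eᶜ := by ext v; simp
    rw [this, Finset.card_compl]

lemma card_bad_single {V : Type*} [Fintype V] [DecidableEq V] {r p k : ℕ}
    (e : Finset V) (he : e.card = k) (hp : 0 < p) (hpr : p - 1 ≤ r) :
    (univ.filter fun f : V → Fin r => (e.image f).card < p).card
      ≤ r.choose (p - 1) * ((p - 1) ^ k * r ^ (Fintype.card V - k)) := by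
  have hsub : (univ.filter fun f : V → Fin r => (e.image f).card < p)
      ⊆ (Finset.powersetCard (p-1) (univ : Finset (Fin r))).biUnion
          (fun T => univ.filter fun f => ∀ v ∈ e, f v ∈ T) := by
    intro f hf
    simp only [mem_filter, mem_univ, true_and] at hf
    have hle : (e.image f).card ≤ p - 1 := (Nat.lt_iff_le_pred hp).mp hf
    obtain ⟨T, hTsub, hTcard⟩ := Finset.exists_superset_card_eq hle
      (by simpa [Fintype.card_fin] using hpr)
    refine Finset.mem_biUnion.mpr ⟨T, ?_, ?_⟩
    · simp [Finset.mem_powersetCard, hTcard]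
    · simp only [mem_filter, mem_univ, true_and]
      intro v hv
      exact hTsub (Finset.mem_image.mpr ⟨v, hv, rfl⟩)
  calc (univ.filter fun f : V → Fin r => (e.image f).card < p).card
      ≤ ∑ T ∈ Finset.powersetCard (p-1) (univ : Finset (Fin r)),
          (univ.filter fun f : V → Fin r => ∀ v ∈ e, f v ∈ T).card :=
        le_trans (Finset.card_le_card hsub) (Finset.card_biUnion_le)
    _ ≤ ∑ T ∈ Finset.powersetCard (p-1) (univ : Finset (Fin r)),
          ((p - 1) ^ k * r ^ (Fintype.card V - k)) := by
        refine Finset.sum_le_sum fun T hT => ?_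
        rw [card_filter_mem_count e T, he, (Finset.mem_powersetCard.mp hT).2]
    _ = r.choose (p - 1) * ((p - 1) ^ k * r ^ (Fintype.card V - k)) := by
        rw [Finset.sum_const, Finset.card_powersetCard, Finset.card_univ, Fintype.card_fin,
          smul_eq_mul]

lemma lll_count {V : Type*} [Fintype V] [DecidableEq V] {r p x : ℕ}
    (E : Finset (Finset V)) (α qx : ℝ) (hr : 0 < r)
    (hα0 : 0 ≤ α) (hα1 : α < 1) (hq0 : 0 ≤ qx)
    (hkey : qx ≤ α * (1 - α) ^ (E.sup fun e => (E.filter fun e' => e' ≠ e ∧ ¬ Disjoint e' e).card))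
    (hBad : ∀ e ∈ E, ((univ.filter fun ω : Fin x → V → Fin r =>
        ¬ ∃ i, p ≤ (e.image (ω i)).card).card : ℝ)
        ≤ qx * (Fintype.card (Fin x → V → Fin r))) :
    ∃ ω : Fin x → V → Fin r, ∀ e ∈ E, ∃ i, p ≤ (e.image (ω i)).card := by
  classical
  set d : ℕ := E.sup fun e => (E.filter fun e' => e' ≠ e ∧ ¬ Disjoint e' e).card with hdd
  set N : ℕ := Fintype.card (Fin x → V → Fin r) with hNN
  have hN : 0 < N := Fintype.card_pos_iff.mpr ⟨fun _ _ => ⟨0, hr⟩⟩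
  -- goodC predicate
  set gc : Finset V → (Fin x → V → Fin r) → Prop :=
    fun e ω => ∃ i, p ≤ (e.image (ω i)).card with hgc
  set G : Finset (Finset V) → Finset (Fin x → V → Fin r) :=
    fun S => univ.filter fun ω => ∀ e ∈ S, gc e ω with hG
  set BG : Finset V → Finset (Finset V) → Finset (Fin x → V → Fin r) :=
    fun e S => univ.filter fun ω => ¬ gc e ω ∧ ∀ e' ∈ S, gc e' ω with hBG
  -- partition identity
  have hpart : ∀ (a : Finset V) (S : Finset (Finset V)),
      ((G S).card : ℝ) = (G (insert a S)).card + (BG a S).card := by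
    intro a S
    have h1 : G (insert a S) = (G S).filter fun ω => gc a ω := by
      simp only [hG, Finset.filter_filter]
      apply Finset.filter_congr
      intro ω _
      simp [Finset.forall_mem_insert, and_comm]
    have h2 : BG a S = (G S).filter fun ω => ¬ gc a ω := by
      simp only [hBG, hG, Finset.filter_filter]
      apply Finset.filter_congr
      intro ω _
      tauto
    rw [h1, h2]
    rw [← Nat.cast_add, Finset.card_filter_add_card_filter_not]
  -- image congruence
  have himg : ∀ (e : Finset V) (ω ω' : Fin x → V → Fin r),
      (∀ i v, v ∈ e → ω i v = ω' i v) → gc e ω → gc e ω' := by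
    rintro e ω ω' hagree ⟨i, hi⟩
    refine ⟨i, ?_⟩
    rwa [show e.image (ω' i) = e.image (ω i) from
      Finset.image_congr fun v hv => (hagree i v hv).symm]
  -- independence
  have hindep : ∀ e ∈ E, ∀ S₂ : Finset (Finset V), (∀ e' ∈ S₂, Disjoint e' e) →
      ((BG e S₂).card : ℝ) * N
        = ((univ.filter fun ω => ¬ gc e ω).card : ℝ) * (G S₂).card := by
    intro e _ S₂ hdisj
    have := indep_count e (fun ω => ¬ gc e ω) (fun ω => ∀ e' ∈ S₂, gc e' ω)
      (fun ω ω' h hb hg => hb (himg e ω' ω (fun i v hv => (h i v hv).symm) hg))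
      (fun ω ω' h hq e' he' => himg e' ω ω'
        (fun i v hv => h i v (Finset.disjoint_left.mp (hdisj e' he') hv)) (hq e' he'))
    exact_mod_cast this
  -- main LLL induction
  have H : ∀ n : ℕ, ∀ S : Finset (Finset V), S ⊆ E → S.card < n → ∀ e ∈ E, e ∉ S →
      ((BG e S).card : ℝ) ≤ α * (G S).card := by
    intro n
    induction n with
    | zero => intro S _ h; exact absurd h (Nat.not_lt_zero _)
    | succ n ih =>
      intro S hSE hScard e heE heS
      set S₁ : Finset (Finset V) := S.filter fun e' => ¬ Disjoint e' e with hS₁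
      set S₂ : Finset (Finset V) := S.filter fun e' => Disjoint e' e with hS₂
      have hS₂S : S₂ ⊆ S := Finset.filter_subset _ _
      have hS₁S : S₁ ⊆ S := Finset.filter_subset _ _
      have hunion : S₁ ∪ S₂ = S := by
        rw [hS₁, hS₂, Finset.union_comm, Finset.filter_union_filter_not_eq]
      -- telescoping
      have htel : ∀ T : Finset (Finset V), T ⊆ S₁ →
          (1 - α) ^ T.card * ((G S₂).card : ℝ) ≤ (G (T ∪ S₂)).card := by
        intro T
        induction T using Finset.induction_on with
        | empty => intro _; simp
        | @insert a T' haT' ihT =>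
          intro hins
          have hT'S₁ : T' ⊆ S₁ := (Finset.subset_insert a T').trans hins
          have haS₁ : a ∈ S₁ := hins (Finset.mem_insert_self a T')
          have haS : a ∈ S := hS₁S haS₁
          have haS₂ : a ∉ S₂ := by
            intro h
            exact (Finset.mem_filter.mp haS₁).2 (Finset.mem_filter.mp h).2
          have haW : a ∉ T' ∪ S₂ := by
            simp only [Finset.mem_union]
            tauto
          have hWE : T' ∪ S₂ ⊆ E :=
            (Finset.union_subset (hT'S₁.trans hS₁S) hS₂S).trans hSE
          have hWS : T' ∪ S₂ ⊆ S := Finset.union_subset (hT'S₁.trans hS₁S) hS₂S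
          have hWcard : (T' ∪ S₂).card < n := by
            have hsub : T' ∪ S₂ ⊆ S.erase a := by
              intro y hy
              refine Finset.mem_erase.mpr ⟨?_, hWS hy⟩
              intro h; subst h; exact haW hy
            have h1 := Finset.card_le_card hsub
            have h2 := Finset.card_erase_of_mem haS
            have h3 := Finset.card_pos.mpr ⟨a, haS⟩
            omega
          have hBGW := ih (T' ∪ S₂) hWE hWcard a (hSE haS) haW
          have hGW := hpart a (T' ∪ S₂)
          have hGWnn : (0:ℝ) ≤ ((G (T' ∪ S₂)).card : ℝ) := Nat.cast_nonneg _
          calc (1 - α) ^ (insert a T').card * ((G S₂).card : ℝ)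
              = (1 - α) * ((1 - α) ^ T'.card * (G S₂).card) := by
                rw [Finset.card_insert_of_notMem haT', pow_succ]; ring
            _ ≤ (1 - α) * (G (T' ∪ S₂)).card := by
                apply mul_le_mul_of_nonneg_left (ihT hT'S₁) (by linarith)
            _ = (G (T' ∪ S₂)).card - α * (G (T' ∪ S₂)).card := by ring
            _ ≤ (G (T' ∪ S₂)).card - (BG a (T' ∪ S₂)).card := by linarith
            _ = (G (insert a (T' ∪ S₂))).card := by rw [hGW]; ring
            _ = (G (insert a T' ∪ S₂)).card := by rw [Finset.insert_union]
      -- S₁ card bound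
      have hS₁d : S₁.card ≤ d := by
        have hsub : S₁ ⊆ E.filter fun e' => e' ≠ e ∧ ¬ Disjoint e' e := by
          intro y hy
          rw [Finset.mem_filter] at hy ⊢
          refine ⟨hSE hy.1, ?_, hy.2⟩
          intro h; subst h; exact heS hy.1
        exact (Finset.card_le_card hsub).trans
          (Finset.le_sup (f := fun e => (E.filter fun e' => e' ≠ e ∧ ¬ Disjoint e' e).card) heE)
      -- independence application
      have hdisj : ∀ e' ∈ S₂, Disjoint e' e := fun e' he' => (Finset.mem_filter.mp he').2
      have h2 := hindep e heE S₂ hdisj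
      have h3 := hBad e heE
      have h3' : ((univ.filter fun ω => ¬ gc e ω).card : ℝ) ≤ qx * N := h3
      have hBG2 : ((BG e S₂).card : ℝ) ≤ qx * (G S₂).card := by
        have hGnn : (0:ℝ) ≤ ((G S₂).card : ℝ) := Nat.cast_nonneg _
        have hNpos : (0:ℝ) < (N : ℝ) := by exact_mod_cast hN
        have hmm := mul_le_mul_of_nonneg_right h3' hGnn
        rw [← h2] at hmm
        have hmm2 : ((BG e S₂).card : ℝ) * N ≤ (qx * (G S₂).card) * N := by linarith
        exact le_of_mul_le_mul_right hmm2 hNpos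
      have hmono : ((BG e S).card : ℝ) ≤ ((BG e S₂).card : ℝ) := by
        have hsub2 : BG e S ⊆ BG e S₂ := by
          intro ω hω
          simp only [hBG, Finset.mem_filter] at hω ⊢
          exact ⟨hω.1, hω.2.1, fun e' he' => hω.2.2 e' (hS₂S he')⟩
        exact_mod_cast Finset.card_le_card hsub2
      have htel' := htel S₁ (Finset.Subset.refl S₁)
      rw [hunion] at htel'
      have hq' : qx ≤ α * (1 - α) ^ S₁.card := by
        refine hkey.trans ?_
        apply mul_le_mul_of_nonneg_left _ hα0
        exact pow_le_pow_of_le_one (by linarith) (by linarith) hS₁d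
      have hGnn : (0:ℝ) ≤ ((G S₂).card : ℝ) := Nat.cast_nonneg _
      calc ((BG e S).card : ℝ) ≤ (BG e S₂).card := hmono
        _ ≤ qx * (G S₂).card := hBG2
        _ ≤ α * (1 - α) ^ S₁.card * (G S₂).card :=
            mul_le_mul_of_nonneg_right hq' hGnn
        _ = α * ((1 - α) ^ S₁.card * (G S₂).card) := by ring
        _ ≤ α * (G S).card := mul_le_mul_of_nonneg_left htel' hα0
  -- positivity
  have hpos : ∀ S : Finset (Finset V), S ⊆ E → (0:ℝ) < (G S).card := by
    intro S
    induction S using Finset.induction_on with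
    | empty =>
      intro _
      have : G ∅ = univ := by simp [hG]
      rw [this]
      exact_mod_cast hN
    | @insert a S' ha ihS =>
      intro hins
      have hS'E : S' ⊆ E := (Finset.subset_insert a S').trans hins
      have haE : a ∈ E := hins (Finset.mem_insert_self a S')
      have hBGle := H (S'.card + 1) S' hS'E (Nat.lt_succ_self _) a haE ha
      have hpa := hpart a S'
      nlinarith [ihS hS'E, hα1]
  have hEpos := hpos E (Finset.Subset.refl E)
  have : (G E).Nonempty := by
    rw [← Finset.card_pos]
    exact_mod_cast hEpos
  obtain ⟨ω, hω⟩ := this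
  rw [hG] at hω
  simp only [Finset.mem_filter] at hω
  exact ⟨ω, hω.2⟩


theorem stmt18 {V : Type*} [Fintype V] [DecidableEq V] (E : Finset (Finset V)) (k r p x : ℕ)
    (hunif : ∀ e ∈ E, e.card = k) (hp2 : 2 ≤ p) (hpr : p ≤ r) (hpk : p ≤ k) (hx : 0 < x)
    (hd : (dependency E : ℝ) ≤
      (1 / Real.exp 1) *
        ((r : ℝ) ^ k / (((p : ℝ) - 1) ^ k * (r.choose (p - 1) : ℝ))) ^ x - 1) :
    HasStrongCover E r p x ∧ coverNumber E r p ≤ x := by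
  classical
  have hr0 : 0 < r := lt_of_lt_of_le (by norm_num) (hp2.trans hpr)
  have hp1r : p - 1 ≤ r := (Nat.sub_le p 1).trans hpr
  set C : ℕ := r.choose (p - 1) with hC
  have hC1 : 0 < C := Nat.choose_pos hp1r
  have hp1cast : ((p - 1 : ℕ) : ℝ) = (p : ℝ) - 1 := by
    have h1p : 1 ≤ p := by omega
    push_cast [h1p]; ring
  have hp1pos : (0:ℝ) < (p:ℝ) - 1 := by
    have : (2:ℝ) ≤ (p:ℝ) := by exact_mod_cast hp2
    linarith
  set qR : ℝ := (C : ℝ) * ((p:ℝ) - 1) ^ k / (r:ℝ) ^ k with hqR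
  have hrk : (0:ℝ) < (r:ℝ) ^ k := pow_pos (by exact_mod_cast hr0) k
  have hqRpos : 0 < qR := by
    apply div_pos _ hrk
    exact mul_pos (by exact_mod_cast hC1) (pow_pos hp1pos k)
  set qx : ℝ := qR ^ x with hqx
  have hqxpos : 0 < qx := pow_pos hqRpos x
  set d : ℕ := dependency E with hdE
  have hexp1 : (1:ℝ) < Real.exp 1 := by
    have := Real.add_one_le_exp 1; linarith
  have hexppos : (0:ℝ) < Real.exp 1 := by linarith
  have hdnn : (0:ℝ) ≤ (d:ℝ) := Nat.cast_nonneg d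
  have hbase : (r:ℝ) ^ k / (((p:ℝ) - 1) ^ k * (C:ℝ)) = qR⁻¹ := by
    rw [hqR, inv_div]; ring_nf
  have hmain : Real.exp 1 * qx * ((d:ℝ) + 1) ≤ 1 := by
    rw [hbase] at hd
    have h7 : ((d:ℝ) + 1) ≤ 1 / Real.exp 1 * qx⁻¹ := by
      rw [inv_pow] at hd
      rw [hqx]
      linarith
    have h8 := mul_le_mul_of_nonneg_right h7 (le_of_lt (mul_pos hexppos hqxpos))
    calc Real.exp 1 * qx * ((d:ℝ) + 1) = ((d:ℝ)+1) * (Real.exp 1 * qx) := by ring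
      _ ≤ (1 / Real.exp 1 * qx⁻¹) * (Real.exp 1 * qx) := h8
      _ = 1 := by field_simp
  have hqx_le : qx ≤ 1 / (Real.exp 1 * ((d:ℝ) + 1)) := by
    rw [le_div_iff₀ (by positivity)]
    nlinarith
  set α : ℝ := if d = 0 then qx else 1 / ((d:ℝ) + 1) with hα
  have hα0 : 0 ≤ α := by
    rw [hα]; split
    · exact le_of_lt hqxpos
    · positivity
  have hα1 : α < 1 := by
    rw [hα]
    by_cases hd0 : d = 0
    · rw [if_pos hd0]
      calc qx ≤ 1 / (Real.exp 1 * ((d:ℝ)+1)) := hqx_le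
        _ < 1 := by
          rw [div_lt_one (by positivity)]
          nlinarith
    · rw [if_neg hd0]
      rw [div_lt_one (by positivity)]
      have hd1 : 1 ≤ d := Nat.one_le_iff_ne_zero.mpr hd0
      have : (1:ℝ) ≤ (d:ℝ) := by exact_mod_cast hd1
      linarith
  have hkey : qx ≤ α * (1 - α) ^ d := by
    rw [hα]
    by_cases hd0 : d = 0
    · simp [hd0]
    · rw [if_neg hd0]
      have hd1 : 1 ≤ d := Nat.one_le_iff_ne_zero.mpr hd0
      have hdpos : (0:ℝ) < (d:ℝ) := by exact_mod_cast hd1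
      have h1 : (1:ℝ) - 1 / ((d:ℝ) + 1) = (d:ℝ) / ((d:ℝ) + 1) := by
        field_simp
        ring
      have h2 : ((1:ℝ) + 1 / (d:ℝ)) ^ d ≤ Real.exp 1 := by
        have h3 : (1:ℝ) + 1 / (d:ℝ) ≤ Real.exp (1 / (d:ℝ)) := by
          have := Real.add_one_le_exp (1 / (d:ℝ)); linarith
        calc ((1:ℝ) + 1 / (d:ℝ)) ^ d ≤ (Real.exp (1 / (d:ℝ))) ^ d :=
              pow_le_pow_left₀ (by positivity) h3 d
          _ = Real.exp ((d:ℝ) * (1 / (d:ℝ))) := by rw [← Real.exp_nat_mul]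
          _ = Real.exp 1 := by congr 1; field_simp
      have h5 : ((1:ℝ) + 1 / (d:ℝ))⁻¹ = (d:ℝ) / ((d:ℝ) + 1) := by
        rw [inv_eq_one_div]
        rw [div_eq_div_iff (by positivity) (by positivity)]
        field_simp
      have h4 : 1 / Real.exp 1 ≤ ((d:ℝ) / ((d:ℝ) + 1)) ^ d := by
        rw [← h5, inv_pow, one_div]
        exact inv_anti₀ (by positivity) h2
      rw [h1]
      calc qx ≤ 1 / (Real.exp 1 * ((d:ℝ) + 1)) := hqx_le
        _ = 1 / ((d:ℝ) + 1) * (1 / Real.exp 1) := by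
            rw [one_div_mul_one_div]; ring_nf
        _ ≤ 1 / ((d:ℝ) + 1) * (((d:ℝ) / ((d:ℝ) + 1)) ^ d) :=
            mul_le_mul_of_nonneg_left h4 (by positivity)
  -- the bad-event probability bound
  have hBad : ∀ e ∈ E, ((univ.filter fun ω : Fin x → V → Fin r =>
      ¬ ∃ i, p ≤ (e.image (ω i)).card).card : ℝ)
      ≤ qx * (Fintype.card (Fin x → V → Fin r)) := by
    intro e heE
    have hek := hunif e heE
    have hkm : k ≤ Fintype.card V := by
      rw [← hek, ← Finset.card_univ]
      exact Finset.card_le_card (Finset.subset_univ e)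
    set m : ℕ := Fintype.card V with hm
    have hfe : (univ.filter fun ω : Fin x → V → Fin r => ¬ ∃ i, p ≤ (e.image (ω i)).card)
        = univ.filter fun ω : Fin x → V → Fin r => ∀ i, (e.image (ω i)).card < p := by
      apply Finset.filter_congr
      intro ω _
      simp [not_exists, not_le]
    rw [hfe, card_filter_forall_fin x (fun f : V → Fin r => (e.image f).card < p)]
    have hB1 := card_bad_single e hek (show 0 < p by omega) hp1r
    have hNval : ((Fintype.card (Fin x → V → Fin r)) : ℝ) = ((r:ℝ) ^ m) ^ x := by
      rw [Fintype.card_fun, Fintype.card_fun, Fintype.card_fin, Fintype.card_fin]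
      push_cast; ring
    rw [hNval]
    have hpow : (r:ℝ) ^ (m - k) * (r:ℝ) ^ k = (r:ℝ) ^ m := by
      rw [← pow_add]; congr 1; omega
    have hqRm : qR * (r:ℝ) ^ m = (C:ℝ) * ((p:ℝ) - 1) ^ k * (r:ℝ) ^ (m - k) := by
      rw [hqR, div_mul_eq_mul_div, div_eq_iff (ne_of_gt hrk)]
      linear_combination ((C:ℝ) * ((p:ℝ) - 1) ^ k) * hpow.symm
    have hAval : ((C * ((p - 1) ^ k * r ^ (m - k)) : ℕ) : ℝ) = qR * (r:ℝ) ^ m := by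
      push_cast [hp1cast]
      rw [hqRm]; ring
    calc (((univ.filter fun f : V → Fin r => (e.image f).card < p).card ^ x : ℕ) : ℝ)
        ≤ (((C * ((p - 1) ^ k * r ^ (m - k)) : ℕ) ^ x : ℕ) : ℝ) := by
          exact_mod_cast Nat.pow_le_pow_left hB1 x
      _ = (qR * (r:ℝ) ^ m) ^ x := by rw [Nat.cast_pow, hAval]
      _ = qx * ((r:ℝ) ^ m) ^ x := by rw [mul_pow, hqx]
  have hkey' : qx ≤ α * (1 - α) ^
      (E.sup fun e => (E.filter fun e' => e' ≠ e ∧ ¬ Disjoint e' e).card) := hkey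
  obtain ⟨ω, hω⟩ := lll_count (p := p) E α qx hr0 hα0 hα1 hqxpos.le hkey' hBad
  exact ⟨⟨ω, hω⟩, Nat.sInf_le ⟨ω, hω⟩⟩
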